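/- String specialization identity (Hall–Littlewood case): let λ = (λ_1 ≥ ⋯ ≥ λ_m > 0) be a partition of k with m parts, let 0 < t < 1 and let w_1, ..., w_m be complex numbers such that all denominators below are nonzero. Define (z_1,...,z_k) = (w_1, t w_1, ..., t^{λ_1−1} w_1, ..., w_m, ..., t^{λ_m−1} w_m). Then ∏_{1 ≤ a < b ≤ k} (1 − t z_a z_b)/(1 − z_a z_b) · ∏_{i=1}^k (1 − t z_i^2)/(1 − z_i^2) = ∏_{1 ≤ a < b ≤ m} [(t^{λ_a} w_a w_b; t)_∞ (t^{λ_b} w_a w_b; t)_∞]/[(w_a w_b; t)_∞ (t^{λ_a+λ_b} w_a w_b; t)_∞] · ∏_{j=1}^m (t^{λ_j} w_j^2; t)_∞/(w_j^2; t)_∞ · (t w_j^2; t^2)_∞/(t^{2λ_j+1} w_j^2; t^2)_∞. -/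

import Mathlib

/-- The infinite q-Pochhammer symbol `(a; q)_∞ = ∏_{i=0}^∞ (1 − a q^i)`. -/
noncomputable def qPochInf (a q : ℂ) : ℂ := ∏' i : ℕ, (1 - a * q^i)

lemma hasProd_zero_of_eq_zero {f : ℕ → ℂ} {i₀ : ℕ} (h : f i₀ = 0) : HasProd f 0 := by
  have hev : ∀ᶠ s in (Filter.atTop : Filter (Finset ℕ)), ∏ i ∈ s, f i = 0 := by
    filter_upwards [Filter.eventually_ge_atTop ({i₀} : Finset ℕ)] with s hs
    exact Finset.prod_eq_zero (hs (Finset.mem_singleton_self i₀)) h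
  exact Filter.Tendsto.congr' (Filter.EventuallyEq.symm hev) tendsto_const_nhds

lemma multipliable_one_sub (c q : ℂ) (hq : ‖q‖ < 1) :
    Multipliable (fun i : ℕ => 1 - c * q ^ i) := by
  by_cases hzero : ∃ i, 1 - c * q ^ i = 0
  · obtain ⟨i₀, hi₀⟩ := hzero
    exact ⟨0, hasProd_zero_of_eq_zero hi₀⟩
  · push_neg at hzero
    have hsum : Summable (fun i : ℕ => Complex.log (1 - c * q ^ i)) := by
      have hgeo : Summable (fun i : ℕ => (3/2 : ℝ) * (‖c‖ * ‖q‖ ^ i)) :=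
        ((summable_geometric_of_lt_one (norm_nonneg q) hq).mul_left ‖c‖).mul_left _
      apply Summable.of_norm_bounded_eventually hgeo
      rw [Nat.cofinite_eq_atTop]
      have htend : Filter.Tendsto (fun i : ℕ => ‖c‖ * ‖q‖ ^ i) Filter.atTop (nhds 0) := by
        simpa using (tendsto_pow_atTop_nhds_zero_of_lt_one (norm_nonneg q) hq).const_mul ‖c‖
      filter_upwards [htend.eventually_le_const (by norm_num : (0:ℝ) < 1/2)] with i hi
      have h1 : ‖-(c * q ^ i)‖ ≤ 1/2 := by
        rw [norm_neg, norm_mul, norm_pow]; exact hi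
      have := Complex.norm_log_one_add_half_le_self h1
      rw [show (1 : ℂ) + -(c * q ^ i) = 1 - c * q ^ i by ring] at this
      calc ‖Complex.log (1 - c * q ^ i)‖ ≤ 3/2 * ‖-(c * q ^ i)‖ := this
        _ = 3/2 * (‖c‖ * ‖q‖ ^ i) := by rw [norm_neg, norm_mul, norm_pow]
    exact Complex.multipliable_of_summable_log hsum

lemma qPochInf_split (c q : ℂ) (hq : ‖q‖ < 1) (n : ℕ) :
    qPochInf c q = (∏ i ∈ Finset.range n, (1 - c * q ^ i)) * qPochInf (q ^ n * c) q := by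
  have hmul : Multipliable (fun i : ℕ => (1 - c * q ^ (i + n))) := by
    have := multipliable_one_sub (q ^ n * c) q hq
    refine this.congr fun i => ?_
    rw [pow_add]; ring
  have := Multipliable.prod_mul_tprod_nat_mul' (f := fun i : ℕ => 1 - c * q ^ i) (k := n) hmul
  rw [qPochInf, ← this, qPochInf]
  congr 1
  exact tprod_congr fun i => by show 1 - c * q ^ (i + n) = _; rw [pow_add]; ring

lemma tele (g : ℕ → ℂ) (a : ℕ) : ∀ n : ℕ, a < n → (∀ i, a ≤ i → i < n → g i ≠ 0) →
    ∏ i ∈ Finset.Ico a n, (g (i+1) / g i) = g n / g a := by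
  intro n
  induction n with
  | zero => omega
  | succ n ih =>
    intro han h
    rcases Nat.lt_or_ge a n with hlt | hge
    · rw [Finset.prod_Ico_succ_top (le_of_lt hlt), ih hlt (fun i h1 h2 => h i h1 (by omega))]
      have hgn : g n ≠ 0 := h n (le_of_lt hlt) (by omega)
      have hga : g a ≠ 0 := h a le_rfl (by omega)
      field_simp
    · have : a = n := by omega
      subst this
      rw [show Finset.Ico a (a+1) = {a} by ext i; simp only [Finset.mem_Ico, Finset.mem_singleton]; omega,
        Finset.prod_singleton]

lemma prod_range_two_mul (f : ℕ → ℂ) (n : ℕ) :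
    ∏ i ∈ Finset.range (2*n), f i =
      (∏ i ∈ Finset.range n, f (2*i)) * ∏ i ∈ Finset.range n, f (2*i+1) := by
  induction n with
  | zero => simp
  | succ n ih =>
    rw [show 2*(n+1) = 2*n + 1 + 1 by ring, Finset.prod_range_succ, Finset.prod_range_succ,
      Finset.prod_range_succ, Finset.prod_range_succ, ih]
    ring

open Finset

lemma offblock (t : ℝ) (ht0 : 0 < t) (ht1 : t < 1) (W : ℂ) (la lb : ℕ)
    (hla : 0 < la) (hlb : 0 < lb)
    (hnz : ∀ u v, u < la → v < lb → 1 - (t:ℂ)^(u+v) * W ≠ 0)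
    (h3 : qPochInf W (t:ℂ) ≠ 0)
    (h4 : qPochInf ((t:ℂ)^(la+lb) * W) (t:ℂ) ≠ 0) :
    ∏ u ∈ range la, ∏ v ∈ range lb, ((1 - (t:ℂ)^(u+v+1)*W)/(1 - (t:ℂ)^(u+v)*W))
      = (qPochInf ((t:ℂ)^la * W) (t:ℂ) * qPochInf ((t:ℂ)^lb * W) (t:ℂ)) /
        (qPochInf W (t:ℂ) * qPochInf ((t:ℂ)^(la+lb) * W) (t:ℂ)) := by
  have hT : ‖(t:ℂ)‖ < 1 := by
    rw [Complex.norm_real, Real.norm_eq_abs, abs_of_pos ht0]; exact ht1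
  set T := (t:ℂ) with hTdef
  -- inner telescoping
  have inner : ∀ u, u < la →
      ∏ v ∈ range lb, ((1 - T^(u+v+1)*W)/(1 - T^(u+v)*W))
        = (1 - T^(u+lb)*W)/(1 - T^u*W) := by
    intro u hu
    have h1 : ∏ v ∈ range lb, ((1 - T^(u+v+1)*W)/(1 - T^(u+v)*W))
        = ∏ v ∈ Finset.Ico 0 lb, ((fun i => 1 - T^(u+i)*W) (v+1) / (fun i => 1 - T^(u+i)*W) v) := by
      rw [Finset.range_eq_Ico]
      refine Finset.prod_congr rfl fun v _ => ?_
      show _ = (1 - T^(u+(v+1))*W) / (1 - T^(u+v)*W)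
      rw [show u+(v+1) = u+v+1 by ring]
    rw [h1, tele _ 0 lb hlb (fun i _ hi => hnz u i hu hi)]
    show (1 - T^(u+lb)*W) / (1 - T^(u+0)*W) = _
    rw [add_zero]
  have houter : ∏ u ∈ range la, ∏ v ∈ range lb, ((1 - T^(u+v+1)*W)/(1 - T^(u+v)*W))
      = (∏ u ∈ range la, (1 - T^(u+lb)*W)) / (∏ u ∈ range la, (1 - T^u*W)) := by
    rw [← Finset.prod_div_distrib]
    exact Finset.prod_congr rfl fun u hu => inner u (Finset.mem_range.mp hu)
  set A := ∏ u ∈ range la, (1 - T^u*W) with hAdef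
  set N := ∏ u ∈ range la, (1 - T^(lb+u)*W) with hNdef
  set C := ∏ i ∈ range lb, (1 - T^(la+i)*W) with hCdef
  set Q := qPochInf (T^(la+lb) * W) T with hQdef
  have hNeq : (∏ u ∈ range la, (1 - T^(u+lb)*W)) = N := by
    exact Finset.prod_congr rfl fun u _ => by rw [add_comm u lb]
  have s1 : qPochInf (T^la * W) T = C * Q := by
    rw [qPochInf_split (T^la * W) T hT lb, hQdef]
    congr 1
    · exact Finset.prod_congr rfl fun i _ => by rw [pow_add]; ring
    · congr 1; rw [pow_add]; ring
  have s2 : qPochInf (T^lb * W) T = N * Q := by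
    rw [qPochInf_split (T^lb * W) T hT la, hQdef]
    congr 1
    · exact Finset.prod_congr rfl fun i _ => by rw [pow_add]; ring
    · congr 1; rw [pow_add]; ring
  have s3 : qPochInf W T = (A * C) * Q := by
    rw [qPochInf_split W T hT (la+lb), hQdef]
    congr 1
    rw [Finset.prod_range_add]
    congr 1
    · exact Finset.prod_congr rfl fun i _ => by ring
    · exact Finset.prod_congr rfl fun i _ => by rw [pow_add]; ring
  have hA : A ≠ 0 := by
    rw [hAdef, Finset.prod_ne_zero_iff]
    intro u hu
    have := hnz u 0 (Finset.mem_range.mp hu) hlb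
    rwa [add_zero] at this
  have hQ : Q ≠ 0 := h4
  have hAC : (A * C) * Q ≠ 0 := by rw [← s3]; exact h3
  have hC : C ≠ 0 := fun h => hAC (by rw [h]; ring)
  rw [houter, hNeq, s1, s2, s3]
  field_simp

lemma diagblock (t : ℝ) (ht0 : 0 < t) (ht1 : t < 1) (W : ℂ) (l : ℕ) (hl : 0 < l)
    (hnz : ∀ u v, u < l → v < l → 1 - (t:ℂ)^(u+v) * W ≠ 0)
    (h5 : qPochInf W (t:ℂ) ≠ 0)
    (h6 : qPochInf ((t:ℂ)^(2*l+1) * W) ((t:ℂ)^2) ≠ 0) :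
    ∏ u ∈ range l, ∏ v ∈ range l,
        (if u ≤ v then (1 - (t:ℂ)^(u+v+1)*W)/(1 - (t:ℂ)^(u+v)*W) else 1)
      = (qPochInf ((t:ℂ)^l * W) (t:ℂ) / qPochInf W (t:ℂ)) *
        (qPochInf ((t:ℂ)*W) ((t:ℂ)^2) / qPochInf ((t:ℂ)^(2*l+1)*W) ((t:ℂ)^2)) := by
  have hT : ‖(t:ℂ)‖ < 1 := by
    rw [Complex.norm_real, Real.norm_eq_abs, abs_of_pos ht0]; exact ht1
  have hT2 : ‖(t:ℂ)^2‖ < 1 := by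
    rw [norm_pow]
    exact pow_lt_one₀ (norm_nonneg _) hT (by norm_num)
  set T := (t:ℂ) with hTdef
  have inner : ∀ u, u < l →
      ∏ v ∈ range l, (if u ≤ v then (1 - T^(u+v+1)*W)/(1 - T^(u+v)*W) else 1)
        = (1 - T^(u+l)*W)/(1 - T^(2*u)*W) := by
    intro u hu
    rw [← Finset.prod_filter]
    have hfil : (range l).filter (fun v => u ≤ v) = Finset.Ico u l := by
      ext v; simp only [Finset.mem_filter, Finset.mem_range, Finset.mem_Ico]; omega
    rw [hfil]
    have h1 : ∏ v ∈ Finset.Ico u l, ((1 - T^(u+v+1)*W)/(1 - T^(u+v)*W))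
        = ∏ v ∈ Finset.Ico u l, ((fun i => 1 - T^(u+i)*W) (v+1) / (fun i => 1 - T^(u+i)*W) v) := by
      refine Finset.prod_congr rfl fun v _ => ?_
      show _ = (1 - T^(u+(v+1))*W) / (1 - T^(u+v)*W)
      rw [show u+(v+1) = u+v+1 by ring]
    rw [h1, tele _ u l hu (fun i hi hi' => hnz u i hu hi')]
    show (1 - T^(u+l)*W) / (1 - T^(u+u)*W) = _
    rw [show u+u = 2*u by ring]
  have houter : ∏ u ∈ range l, ∏ v ∈ range l,
        (if u ≤ v then (1 - T^(u+v+1)*W)/(1 - T^(u+v)*W) else 1)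
      = (∏ u ∈ range l, (1 - T^(u+l)*W)) / (∏ u ∈ range l, (1 - T^(2*u)*W)) := by
    rw [← Finset.prod_div_distrib]
    exact Finset.prod_congr rfl fun u hu => inner u (Finset.mem_range.mp hu)
  set A1 := ∏ i ∈ range l, (1 - T^i*W) with hA1def
  set A2 := ∏ i ∈ range l, (1 - T^(2*i+1)*W) with hA2def
  set N1 := ∏ u ∈ range l, (1 - T^(l+u)*W) with hN1def
  set D1 := ∏ u ∈ range l, (1 - T^(2*u)*W) with hD1def
  set Qd := qPochInf (T^l * W) T with hQddef
  set Q2 := qPochInf (T^(2*l+1) * W) (T^2) with hQ2def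
  have s1 : qPochInf W T = A1 * Qd := by
    rw [qPochInf_split W T hT l, hQddef]
    congr 1
    exact Finset.prod_congr rfl fun i _ => by ring
  have s2 : qPochInf (T*W) (T^2) = A2 * Q2 := by
    rw [qPochInf_split (T*W) (T^2) hT2 l, hQ2def]
    congr 1
    · refine Finset.prod_congr rfl fun i _ => ?_
      rw [← pow_mul, show 2*i+1 = 2*i+1 from rfl, pow_add, pow_one]
      ring
    · congr 1
      rw [← pow_mul, pow_add, pow_one]
      ring
  have hA1Qd : A1 * Qd ≠ 0 := by rw [← s1]; exact h5
  have hA1 : A1 ≠ 0 := fun h => hA1Qd (by rw [h]; ring)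
  have hQd : Qd ≠ 0 := fun h => hA1Qd (by rw [h]; ring)
  have hQ2 : Q2 ≠ 0 := h6
  have hD1 : D1 ≠ 0 := by
    rw [hD1def, Finset.prod_ne_zero_iff]
    intro u hu
    have := hnz u u (Finset.mem_range.mp hu) (Finset.mem_range.mp hu)
    rwa [show u + u = 2*u by ring] at this
  have hN1eq : (∏ u ∈ range l, (1 - T^(u+l)*W)) = N1 :=
    Finset.prod_congr rfl fun u _ => by rw [add_comm u l]
  have key : N1 * A1 = A2 * D1 := by
    have e1 : A1 * N1 = ∏ i ∈ range (l + l), (1 - T^i*W) := by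
      rw [Finset.prod_range_add]
    have e2 : D1 * A2 = ∏ i ∈ range (2*l), (1 - T^i*W) := by
      rw [prod_range_two_mul (fun i => 1 - T^i*W) l]
    rw [show l + l = 2*l by ring] at e1
    calc N1 * A1 = A1 * N1 := by ring
      _ = D1 * A2 := by rw [e1, ← e2]
      _ = A2 * D1 := by ring
  rw [houter, hN1eq, s1, s2]
  have hr : Qd / (A1 * Qd) * (A2 * Q2 / Q2) = A2 / A1 := by
    field_simp [hA1, hQd, hQ2]
  rw [hr, div_eq_div_iff hD1 hA1]
  linear_combination key



lemma pairs_reindex {α β : Type*} [Fintype α] [LinearOrder α] [DecidableEq β] [Fintype β]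
    (e : α ≃ β) (F : β → β → ℂ) (hF : ∀ p q, F p q = F q p)
    (P : β → β → Prop) [DecidableRel P]
    (Ptot : ∀ p q, P p q ∨ P q p) (Pasym : ∀ p q, P p q → P q p → p = q)
    (Prefl : ∀ p, P p p) :
    ∏ r ∈ Finset.univ.filter (fun r : α × α => r.1 ≤ r.2), F (e r.1) (e r.2)
      = ∏ r ∈ Finset.univ.filter (fun r : β × β => P r.1 r.2), F r.1 r.2 := by
  refine Finset.prod_nbij'
    (fun r => if P (e r.1) (e r.2) then (e r.1, e r.2) else (e r.2, e r.1))
    (fun r => if e.symm r.1 ≤ e.symm r.2 then (e.symm r.1, e.symm r.2)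
      else (e.symm r.2, e.symm r.1)) ?_ ?_ ?_ ?_ ?_
  · intro r _
    by_cases h : P (e r.1) (e r.2) <;> simp only [h, if_true, if_false, mem_filter,
      mem_univ, true_and]
    exact (Ptot (e r.1) (e r.2)).resolve_left h
  · intro r _
    by_cases h : e.symm r.1 ≤ e.symm r.2 <;> simp only [h, if_true, if_false, mem_filter,
      mem_univ, true_and]
    exact le_of_lt (lt_of_not_ge h)
  · intro r hr
    simp only [mem_filter, mem_univ, true_and] at hr
    by_cases h : P (e r.1) (e r.2)
    · simp only [h, if_true, Equiv.symm_apply_apply, hr, if_true]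
    · simp only [h, if_false, Equiv.symm_apply_apply]
      have hne : r.1 ≠ r.2 := by
        rintro heq
        exact h (heq ▸ Prefl (e r.1))
      have : ¬ (r.2 ≤ r.1) := fun hle => hne (le_antisymm hr hle)
      simp only [this, if_false]
  · rintro ⟨r1, r2⟩ hr
    simp only [mem_filter, mem_univ, true_and] at hr
    by_cases h : e.symm r1 ≤ e.symm r2
    · simp only [h, if_true, Equiv.apply_symm_apply, hr, if_true]
    · simp only [h, if_false, Equiv.apply_symm_apply]
      by_cases h2 : P r2 r1
      · have h3 : r1 = r2 := Pasym _ _ hr h2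
        subst h3; simp [h2]
      · simp [h2]
  · intro r _
    by_cases h : P (e r.1) (e r.2)
    · simp only [h, if_true]
    · simp only [h, if_false]
      exact hF _ _



lemma prod_le_pairs {α : Type*} [Fintype α] [LinearOrder α] [LocallyFiniteOrderTop α]
    (f : α → α → ℂ) :
    ∏ r ∈ Finset.univ.filter (fun r : α × α => r.1 ≤ r.2), f r.1 r.2
      = (∏ i, ∏ j ∈ Finset.Ioi i, f i j) * ∏ i, f i i := by
  rw [show (Finset.univ : Finset (α × α)) = Finset.univ ×ˢ Finset.univ from
    (Finset.univ_product_univ).symm]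
  rw [Finset.prod_filter, Finset.prod_product' (f := fun i j => if i ≤ j then f i j else 1)]
  have step : ∀ i : α, (∏ j, if i ≤ j then f i j else 1) = f i i * ∏ j ∈ Finset.Ioi i, f i j := by
    intro i
    rw [← Finset.prod_filter]
    have : Finset.univ.filter (fun j => i ≤ j) = Finset.Ici i := by
      ext j; simp
    rw [this, Finset.Ici_eq_cons_Ioi, Finset.prod_cons]
  rw [Finset.prod_congr rfl (fun i _ => step i), Finset.prod_mul_distrib]
  ring


/-- String specialization identity (Hall–Littlewood case): let `λ = (λ_1 ≥ ⋯ ≥ λ_m > 0)` be a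
partition of `k`, `0 < t < 1`, and let `(z_1,...,z_k)` be the concatenation
`(w_1, t w_1, ..., t^{λ_1−1} w_1, ..., w_m, ..., t^{λ_m−1} w_m)` (encoded via a bijection
`e : Fin k ≃ Σ a, Fin (λ a)`).  Then
`∏_{a<b≤k} (1 − t z_a z_b)/(1 − z_a z_b) · ∏_i (1 − t z_i²)/(1 − z_i²)
 = ∏_{a<b≤m} (t^{λ_a} w_a w_b;t)_∞ (t^{λ_b} w_a w_b;t)_∞ /
     ((w_a w_b;t)_∞ (t^{λ_a+λ_b} w_a w_b;t)_∞)
   · ∏_j (t^{λ_j} w_j²;t)_∞/(w_j²;t)_∞ · (t w_j²;t²)_∞/(t^{2λ_j+1} w_j²;t²)_∞`. -/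
theorem string_specialization_HallLittlewood
    {m k : ℕ} (lam : Fin m → ℕ) (t : ℝ) (ht0 : 0 < t) (ht1 : t < 1)
    (w : Fin m → ℂ)
    (hpos : ∀ a, 0 < lam a)
    (hmono : ∀ a b : Fin m, a ≤ b → lam b ≤ lam a)
    (hk : ∑ a, lam a = k)
    (z : Fin k → ℂ) (e : Fin k ≃ (Σ a : Fin m, Fin (lam a)))
    (hz : ∀ i, z i = (t:ℂ)^(((e i).2 : ℕ)) * w (e i).1)
    (hden1 : ∀ i j : Fin k, i ≠ j → 1 - z i * z j ≠ 0)
    (hden2 : ∀ i, 1 - (z i)^2 ≠ 0)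
    (hden3 : ∀ a b : Fin m, a ≠ b → qPochInf (w a * w b) (t:ℂ) ≠ 0)
    (hden4 : ∀ a b : Fin m, a ≠ b →
      qPochInf ((t:ℂ)^(lam a + lam b) * (w a * w b)) (t:ℂ) ≠ 0)
    (hden5 : ∀ j, qPochInf ((w j)^2) (t:ℂ) ≠ 0)
    (hden6 : ∀ j, qPochInf ((t:ℂ)^(2 * lam j + 1) * (w j)^2) ((t:ℂ)^2) ≠ 0) :
    (∏ i : Fin k, ∏ j ∈ Finset.Ioi i, (1 - (t:ℂ) * z i * z j) / (1 - z i * z j)) *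
        ∏ i : Fin k, (1 - (t:ℂ) * (z i)^2) / (1 - (z i)^2) =
      (∏ a : Fin m, ∏ b ∈ Finset.Ioi a,
          (qPochInf ((t:ℂ)^(lam a) * (w a * w b)) (t:ℂ) *
              qPochInf ((t:ℂ)^(lam b) * (w a * w b)) (t:ℂ)) /
            (qPochInf (w a * w b) (t:ℂ) *
              qPochInf ((t:ℂ)^(lam a + lam b) * (w a * w b)) (t:ℂ))) *
        ∏ j : Fin m,
          (qPochInf ((t:ℂ)^(lam j) * (w j)^2) (t:ℂ) / qPochInf ((w j)^2) (t:ℂ)) *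
            (qPochInf ((t:ℂ) * (w j)^2) ((t:ℂ)^2) /
              qPochInf ((t:ℂ)^(2 * lam j + 1) * (w j)^2) ((t:ℂ)^2)) := by
  set F : (Σ a : Fin m, Fin (lam a)) → (Σ a : Fin m, Fin (lam a)) → ℂ :=
    fun p q => (1 - (t:ℂ) * ((t:ℂ)^(p.2:ℕ) * w p.1) * ((t:ℂ)^(q.2:ℕ) * w q.1)) /
      (1 - ((t:ℂ)^(p.2:ℕ) * w p.1) * ((t:ℂ)^(q.2:ℕ) * w q.1)) with hFdef
  have hzval : ∀ s : Σ a : Fin m, Fin (lam a),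
      z (e.symm s) = (t:ℂ)^((s.2:ℕ)) * w s.1 := by
    intro s
    have h := hz (e.symm s)
    rwa [Equiv.apply_symm_apply] at h
  have hne_mk : ∀ (a b : Fin m) (x : Fin (lam a)) (y : Fin (lam b)),
      (a ≠ b ∨ (x:ℕ) ≠ (y:ℕ)) →
      (⟨a,x⟩ : Σ a : Fin m, Fin (lam a)) ≠ ⟨b,y⟩ := by
    rintro a b x y h heq
    obtain ⟨h1, h2⟩ := Sigma.mk.inj_iff.mp heq
    rcases h with h | h
    · exact h h1
    · subst h1; exact h (congrArg Fin.val (eq_of_heq h2))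
  have hnzoff : ∀ (a b : Fin m), a ≠ b → ∀ u v, u < lam a → v < lam b →
      1 - (t:ℂ)^(u+v) * (w a * w b) ≠ 0 := by
    intro a b hab u v hu hv
    have hne := hden1 (e.symm ⟨a, ⟨u, hu⟩⟩) (e.symm ⟨b, ⟨v, hv⟩⟩)
      (fun h => (hne_mk a b ⟨u,hu⟩ ⟨v,hv⟩ (Or.inl hab)) (e.symm.injective h))
    rw [hzval, hzval] at hne
    intro h0
    apply hne
    rw [show ((t:ℂ)^u * w a) * ((t:ℂ)^v * w b) = (t:ℂ)^(u+v) * (w a * w b) by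
      rw [pow_add]; ring]
    exact h0
  have hnzdiag : ∀ (a : Fin m), ∀ u v, u < lam a → v < lam a →
      1 - (t:ℂ)^(u+v) * ((w a)^2) ≠ 0 := by
    intro a u v hu hv
    by_cases huv : u = v
    · subst huv
      have h2 := hden2 (e.symm ⟨a, ⟨u, hu⟩⟩)
      rw [hzval] at h2
      intro h0
      apply h2
      rw [show ((t:ℂ)^u * w a)^2 = (t:ℂ)^(u+u) * (w a)^2 by rw [pow_add]; ring]
      exact h0
    · have hne := hden1 (e.symm ⟨a, ⟨u, hu⟩⟩) (e.symm ⟨a, ⟨v, hv⟩⟩)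
        (fun h => (hne_mk a a ⟨u,hu⟩ ⟨v,hv⟩ (Or.inr huv)) (e.symm.injective h))
      rw [hzval, hzval] at hne
      intro h0
      apply hne
      rw [show ((t:ℂ)^u * w a) * ((t:ℂ)^v * w a) = (t:ℂ)^(u+v) * (w a)^2 by
        rw [pow_add]; ring]
      exact h0
  -- Step 1
  have step1 : (∏ i : Fin k, ∏ j ∈ Finset.Ioi i, (1 - (t:ℂ) * z i * z j) / (1 - z i * z j)) *
        ∏ i : Fin k, (1 - (t:ℂ) * (z i)^2) / (1 - (z i)^2)
      = ∏ r ∈ Finset.univ.filter (fun r : Fin k × Fin k => r.1 ≤ r.2),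
          F (e r.1) (e r.2) := by
    rw [prod_le_pairs (fun i j => F (e i) (e j))]
    congr 1
    · refine Finset.prod_congr rfl fun i _ => Finset.prod_congr rfl fun j _ => ?_
      simp only [hFdef]
      rw [← hz i, ← hz j]
    · refine Finset.prod_congr rfl fun i _ => ?_
      simp only [hFdef]
      rw [← hz i]
      congr 1 <;> ring
  -- Step 2
  have step2 : (∏ r ∈ Finset.univ.filter (fun r : Fin k × Fin k => r.1 ≤ r.2),
          F (e r.1) (e r.2))
      = ∏ r ∈ Finset.univ.filter
          (fun r : (Σ a : Fin m, Fin (lam a)) × (Σ a : Fin m, Fin (lam a)) =>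
            r.1.1 < r.2.1 ∨ (r.1.1 = r.2.1 ∧ (r.1.2:ℕ) ≤ (r.2.2:ℕ))),
          F r.1 r.2 := by
    refine pairs_reindex e F (fun p q => by simp only [hFdef]; congr 1 <;> ring)
      (fun p q => p.1 < q.1 ∨ (p.1 = q.1 ∧ (p.2:ℕ) ≤ (q.2:ℕ))) ?_ ?_ ?_
    · intro p q
      rcases lt_trichotomy p.1 q.1 with h | h | h
      · exact Or.inl (Or.inl h)
      · rcases le_total (p.2:ℕ) (q.2:ℕ) with h2 | h2
        · exact Or.inl (Or.inr ⟨h, h2⟩)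
        · exact Or.inr (Or.inr ⟨h.symm, h2⟩)
      · exact Or.inr (Or.inl h)
    · rintro ⟨a,x⟩ ⟨b,y⟩ h1 h2
      rcases h1 with h1 | ⟨rfl, h1b⟩
      · rcases h2 with h2 | ⟨rfl, h2b⟩
        · exact absurd (h1.trans h2) (lt_irrefl a)
        · exact absurd h1 (lt_irrefl _)
      · rcases h2 with h2 | ⟨-, h2b⟩
        · exact absurd h2 (lt_irrefl a)
        · have hxy : x = y := Fin.ext (le_antisymm h1b h2b)
          rw [hxy]
    · exact fun p => Or.inr ⟨rfl, le_refl _⟩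
  -- Step 3
  have partA : (∏ p : (Σ a : Fin m, Fin (lam a)), ∏ q : (Σ a : Fin m, Fin (lam a)),
        if p.1 < q.1 then F p q else 1)
      = ∏ a : Fin m, ∏ b ∈ Finset.Ioi a, ∏ x : Fin (lam a), ∏ y : Fin (lam b),
          F ⟨a,x⟩ ⟨b,y⟩ := by
    rw [← Finset.univ_sigma_univ, Finset.prod_sigma]
    refine Finset.prod_congr rfl fun a _ => ?_
    calc ∏ x : Fin (lam a), ∏ q : (Σ a : Fin m, Fin (lam a)),
            (if a < q.1 then F ⟨a,x⟩ q else 1)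
        = ∏ x : Fin (lam a), ∏ b : Fin m, ∏ y : Fin (lam b),
            (if a < b then F ⟨a,x⟩ ⟨b,y⟩ else 1) := by
          refine Finset.prod_congr rfl fun x _ => ?_
          rw [← Finset.univ_sigma_univ, Finset.prod_sigma]
      _ = ∏ b : Fin m, ∏ x : Fin (lam a), ∏ y : Fin (lam b),
            (if a < b then F ⟨a,x⟩ ⟨b,y⟩ else 1) := Finset.prod_comm
      _ = ∏ b : Fin m, (if a < b then
            ∏ x : Fin (lam a), ∏ y : Fin (lam b), F ⟨a,x⟩ ⟨b,y⟩ else 1) := by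
          refine Finset.prod_congr rfl fun b _ => ?_
          by_cases h : a < b
          · simp [h]
          · simp [h]
      _ = ∏ b ∈ Finset.Ioi a, ∏ x : Fin (lam a), ∏ y : Fin (lam b),
            F ⟨a,x⟩ ⟨b,y⟩ := by
          rw [← Finset.prod_filter]
          congr 1
          ext b
          simp
  have partB : (∏ p : (Σ a : Fin m, Fin (lam a)), ∏ q : (Σ a : Fin m, Fin (lam a)),
        if p.1 = q.1 ∧ (p.2:ℕ) ≤ (q.2:ℕ) then F p q else 1)
      = ∏ a : Fin m, ∏ x : Fin (lam a), ∏ y : Fin (lam a),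
          (if (x:ℕ) ≤ (y:ℕ) then F ⟨a,x⟩ ⟨a,y⟩ else 1) := by
    rw [← Finset.univ_sigma_univ, Finset.prod_sigma]
    refine Finset.prod_congr rfl fun a _ => ?_
    calc ∏ x : Fin (lam a), ∏ q : (Σ a : Fin m, Fin (lam a)),
            (if a = q.1 ∧ ((x:ℕ)) ≤ (q.2:ℕ) then F ⟨a,x⟩ q else 1)
        = ∏ x : Fin (lam a), ∏ b : Fin m, ∏ y : Fin (lam b),
            (if a = b ∧ (x:ℕ) ≤ (y:ℕ) then F ⟨a,x⟩ ⟨b,y⟩ else 1) := by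
          refine Finset.prod_congr rfl fun x _ => ?_
          rw [← Finset.univ_sigma_univ, Finset.prod_sigma]
      _ = ∏ x : Fin (lam a), ∏ y : Fin (lam a),
            (if (x:ℕ) ≤ (y:ℕ) then F ⟨a,x⟩ ⟨a,y⟩ else 1) := by
          refine Finset.prod_congr rfl fun x _ => ?_
          rw [Finset.prod_eq_single a (fun b _ hb => Finset.prod_eq_one fun y _ => by
            simp [Ne.symm hb]) (fun h => absurd (Finset.mem_univ a) h)]
          simp
  have step3 : (∏ r ∈ Finset.univ.filter
          (fun r : (Σ a : Fin m, Fin (lam a)) × (Σ a : Fin m, Fin (lam a)) =>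
            r.1.1 < r.2.1 ∨ (r.1.1 = r.2.1 ∧ (r.1.2:ℕ) ≤ (r.2.2:ℕ))),
          F r.1 r.2)
      = (∏ a : Fin m, ∏ b ∈ Finset.Ioi a, ∏ x : Fin (lam a), ∏ y : Fin (lam b),
            F ⟨a,x⟩ ⟨b,y⟩)
        * (∏ a : Fin m, ∏ x : Fin (lam a), ∏ y : Fin (lam a),
            (if (x:ℕ) ≤ (y:ℕ) then F ⟨a,x⟩ ⟨a,y⟩ else 1)) := by
    rw [show (Finset.univ : Finset ((Σ a : Fin m, Fin (lam a)) × (Σ a : Fin m, Fin (lam a))))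
        = Finset.univ ×ˢ Finset.univ from (Finset.univ_product_univ).symm]
    rw [Finset.prod_filter, Finset.prod_product'
      (f := fun p q : (Σ a : Fin m, Fin (lam a)) =>
        if p.1 < q.1 ∨ (p.1 = q.1 ∧ (p.2:ℕ) ≤ (q.2:ℕ)) then F p q else 1)]
    have split : ∀ p q : (Σ a : Fin m, Fin (lam a)),
        (if p.1 < q.1 ∨ (p.1 = q.1 ∧ (p.2:ℕ) ≤ (q.2:ℕ)) then F p q else 1)
          = (if p.1 < q.1 then F p q else 1)
            * (if p.1 = q.1 ∧ (p.2:ℕ) ≤ (q.2:ℕ) then F p q else 1) := by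
      intro p q
      by_cases h1 : p.1 < q.1
      · have h2 : ¬(p.1 = q.1 ∧ (p.2:ℕ) ≤ (q.2:ℕ)) := fun hh => absurd h1 (hh.1 ▸ lt_irrefl _)
        simp [h1, h2]
      · by_cases h2 : p.1 = q.1 ∧ (p.2:ℕ) ≤ (q.2:ℕ)
        · simp [h1, h2]
        · simp [h1, h2]
    simp_rw [split, Finset.prod_mul_distrib]
    rw [partA, partB]
  -- Step 4 : per-block evaluation
  have blockoff : ∀ a : Fin m, ∀ b ∈ Finset.Ioi a,
      (∏ x : Fin (lam a), ∏ y : Fin (lam b), F ⟨a,x⟩ ⟨b,y⟩)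
        = (qPochInf ((t:ℂ)^(lam a) * (w a * w b)) (t:ℂ) *
            qPochInf ((t:ℂ)^(lam b) * (w a * w b)) (t:ℂ)) /
          (qPochInf (w a * w b) (t:ℂ) *
            qPochInf ((t:ℂ)^(lam a + lam b) * (w a * w b)) (t:ℂ)) := by
    intro a b hb
    have hab : a ≠ b := ne_of_lt (Finset.mem_Ioi.mp hb)
    have conv : (∏ x : Fin (lam a), ∏ y : Fin (lam b), F ⟨a,x⟩ ⟨b,y⟩)
        = ∏ u ∈ Finset.range (lam a), ∏ v ∈ Finset.range (lam b),
            ((1 - (t:ℂ)^(u+v+1)*(w a * w b))/(1 - (t:ℂ)^(u+v)*(w a * w b))) := by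
      simp only [hFdef]
      calc (∏ x : Fin (lam a), ∏ y : Fin (lam b),
              (1 - (t:ℂ) * ((t:ℂ)^(x:ℕ) * w a) * ((t:ℂ)^(y:ℕ) * w b)) /
                (1 - ((t:ℂ)^(x:ℕ) * w a) * ((t:ℂ)^(y:ℕ) * w b)))
          = ∏ u ∈ Finset.range (lam a), ∏ y : Fin (lam b),
              (1 - (t:ℂ) * ((t:ℂ)^u * w a) * ((t:ℂ)^(y:ℕ) * w b)) /
                (1 - ((t:ℂ)^u * w a) * ((t:ℂ)^(y:ℕ) * w b)) :=
            Fin.prod_univ_eq_prod_range (fun u => ∏ y : Fin (lam b),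
              (1 - (t:ℂ) * ((t:ℂ)^u * w a) * ((t:ℂ)^(y:ℕ) * w b)) /
                (1 - ((t:ℂ)^u * w a) * ((t:ℂ)^(y:ℕ) * w b))) (lam a)
        _ = ∏ u ∈ Finset.range (lam a), ∏ v ∈ Finset.range (lam b),
              (1 - (t:ℂ) * ((t:ℂ)^u * w a) * ((t:ℂ)^v * w b)) /
                (1 - ((t:ℂ)^u * w a) * ((t:ℂ)^v * w b)) :=
            Finset.prod_congr rfl fun u _ => Fin.prod_univ_eq_prod_range
              (fun v => (1 - (t:ℂ) * ((t:ℂ)^u * w a) * ((t:ℂ)^v * w b)) /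
                (1 - ((t:ℂ)^u * w a) * ((t:ℂ)^v * w b))) (lam b)
        _ = ∏ u ∈ Finset.range (lam a), ∏ v ∈ Finset.range (lam b),
              ((1 - (t:ℂ)^(u+v+1)*(w a * w b))/(1 - (t:ℂ)^(u+v)*(w a * w b))) :=
            Finset.prod_congr rfl fun u _ => Finset.prod_congr rfl fun v _ => by
              congr 1 <;> ring
    rw [conv]
    exact offblock t ht0 ht1 (w a * w b) (lam a) (lam b) (hpos a) (hpos b)
      (hnzoff a b hab) (hden3 a b hab) (hden4 a b hab)
  have blockdiag : ∀ j : Fin m,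
      (∏ x : Fin (lam j), ∏ y : Fin (lam j),
          (if (x:ℕ) ≤ (y:ℕ) then F ⟨j,x⟩ ⟨j,y⟩ else 1))
        = (qPochInf ((t:ℂ)^(lam j) * (w j)^2) (t:ℂ) / qPochInf ((w j)^2) (t:ℂ)) *
            (qPochInf ((t:ℂ) * (w j)^2) ((t:ℂ)^2) /
              qPochInf ((t:ℂ)^(2 * lam j + 1) * (w j)^2) ((t:ℂ)^2)) := by
    intro j
    have conv : (∏ x : Fin (lam j), ∏ y : Fin (lam j),
          (if (x:ℕ) ≤ (y:ℕ) then F ⟨j,x⟩ ⟨j,y⟩ else 1))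
        = ∏ u ∈ Finset.range (lam j), ∏ v ∈ Finset.range (lam j),
            (if u ≤ v then
              (1 - (t:ℂ)^(u+v+1)*((w j)^2))/(1 - (t:ℂ)^(u+v)*((w j)^2)) else 1) := by
      simp only [hFdef]
      calc (∏ x : Fin (lam j), ∏ y : Fin (lam j),
              (if (x:ℕ) ≤ (y:ℕ) then
                (1 - (t:ℂ) * ((t:ℂ)^(x:ℕ) * w j) * ((t:ℂ)^(y:ℕ) * w j)) /
                  (1 - ((t:ℂ)^(x:ℕ) * w j) * ((t:ℂ)^(y:ℕ) * w j)) else 1))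
          = ∏ u ∈ Finset.range (lam j), ∏ y : Fin (lam j),
              (if u ≤ (y:ℕ) then
                (1 - (t:ℂ) * ((t:ℂ)^u * w j) * ((t:ℂ)^(y:ℕ) * w j)) /
                  (1 - ((t:ℂ)^u * w j) * ((t:ℂ)^(y:ℕ) * w j)) else 1) :=
            Fin.prod_univ_eq_prod_range (fun u => ∏ y : Fin (lam j),
              (if u ≤ (y:ℕ) then
                (1 - (t:ℂ) * ((t:ℂ)^u * w j) * ((t:ℂ)^(y:ℕ) * w j)) /
                  (1 - ((t:ℂ)^u * w j) * ((t:ℂ)^(y:ℕ) * w j)) else 1)) (lam j)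
        _ = ∏ u ∈ Finset.range (lam j), ∏ v ∈ Finset.range (lam j),
              (if u ≤ v then
                (1 - (t:ℂ) * ((t:ℂ)^u * w j) * ((t:ℂ)^v * w j)) /
                  (1 - ((t:ℂ)^u * w j) * ((t:ℂ)^v * w j)) else 1) :=
            Finset.prod_congr rfl fun u _ => Fin.prod_univ_eq_prod_range
              (fun v => (if u ≤ v then
                (1 - (t:ℂ) * ((t:ℂ)^u * w j) * ((t:ℂ)^v * w j)) /
                  (1 - ((t:ℂ)^u * w j) * ((t:ℂ)^v * w j)) else 1)) (lam j)
        _ = ∏ u ∈ Finset.range (lam j), ∏ v ∈ Finset.range (lam j),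
              (if u ≤ v then
                (1 - (t:ℂ)^(u+v+1)*((w j)^2))/(1 - (t:ℂ)^(u+v)*((w j)^2)) else 1) :=
            Finset.prod_congr rfl fun u _ => Finset.prod_congr rfl fun v _ => by
              by_cases h : u ≤ v
              · simp only [h, if_true]
                congr 1 <;> ring
              · simp only [h, if_false]
    rw [conv]
    exact diagblock t ht0 ht1 ((w j)^2) (lam j) (hpos j)
      (hnzdiag j) (hden5 j) (hden6 j)
  rw [step1, step2, step3]
  congr 1
  · exact Finset.prod_congr rfl fun a _ => Finset.prod_congr rfl fun b hb => blockoff a b hb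
  · exact Finset.prod_congr rfl fun j _ => blockdiag j
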